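/- arXiv:1402.5833 — 3 statements merged into one kernel-verified Lean document; each statement's English description precedes it below -/
import Mathlib

section
/- Classification of lines in the Lie algebra of lower triangular 2×2 real matrices: let X = E₂₁ (the matrix with 1 in position (2,1) and 0 elsewhere) and Y = E₂₂. For every one-dimensional subspace ℓ of the space of lower triangular 2×2 real matrices, there exists an invertible lower triangular g ∈ GL(2,ℝ) such that g ℓ g⁻¹ is exactly one of: ℝ·(λI + Y) for a unique λ ∈ ℝ; ℝ·X; ℝ·(I + X); or ℝ·I. These representatives are pairwise non-conjugate under invertible lower triangular matrices. -/
open Matrix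

noncomputable def X : Matrix (Fin 2) (Fin 2) ℝ := !![0, 0; 1, 0]

noncomputable def Y : Matrix (Fin 2) (Fin 2) ℝ := !![0, 0; 0, 1]

/-- The line ℝ·A in M₂(ℝ). -/
def line (A : Matrix (Fin 2) (Fin 2) ℝ) : Set (Matrix (Fin 2) (Fin 2) ℝ) :=
  {B | ∃ t : ℝ, B = t • A}

/-- Conjugation of a set of matrices by g. -/
def mconj (g : Matrix (Fin 2) (Fin 2) ℝ) (S : Set (Matrix (Fin 2) (Fin 2) ℝ)) :
    Set (Matrix (Fin 2) (Fin 2) ℝ) :=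
  (fun A => g * A * g⁻¹) '' S

/-- g is an invertible lower triangular matrix. -/
def lowerUnit (g : Matrix (Fin 2) (Fin 2) ℝ) : Prop := IsUnit g ∧ g 0 1 = 0

-- auxiliary lemmas

lemma lower_inv (p q r : ℝ) (hp : p ≠ 0) (hr : r ≠ 0) :
    (!![p, 0; q, r])⁻¹ = !![p⁻¹, 0; -q / (p * r), r⁻¹] := by
  apply inv_eq_right_inv
  rw [Matrix.mul_fin_two, Matrix.one_fin_two]
  ext i j
  fin_cases i <;> fin_cases j <;> simp [hp, hr] <;> field_simp <;> ring

lemma conj_formula (p q r : ℝ) (hp : p ≠ 0) (hr : r ≠ 0)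
    (A : Matrix (Fin 2) (Fin 2) ℝ) (hA : A 0 1 = 0) :
    !![p, 0; q, r] * A * (!![p, 0; q, r])⁻¹ =
      !![A 0 0, 0; (q * (A 0 0 - A 1 1) + r * A 1 0) / p, A 1 1] := by
  rw [lower_inv p q r hp hr, Matrix.eta_fin_two A, hA, Matrix.mul_fin_two, Matrix.mul_fin_two]
  ext i j
  fin_cases i <;> fin_cases j <;> simp <;> field_simp <;> ring

lemma lowerUnit_iff (g : Matrix (Fin 2) (Fin 2) ℝ) :
    lowerUnit g ↔ ∃ p q r : ℝ, p ≠ 0 ∧ r ≠ 0 ∧ g = !![p, 0; q, r] := by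
  constructor
  · rintro ⟨hu, h01⟩
    refine ⟨g 0 0, g 1 0, g 1 1, ?_, ?_, by ext i j; fin_cases i <;> fin_cases j <;> simp [h01]⟩ <;>
    · rw [Matrix.isUnit_iff_isUnit_det, isUnit_iff_ne_zero, Matrix.det_fin_two, h01] at hu
      simp only [mul_zero, zero_mul, sub_zero] at hu
      intro h; apply hu; simp [h]
  · rintro ⟨p, q, r, hp, hr, rfl⟩
    refine ⟨?_, by simp⟩
    rw [Matrix.isUnit_iff_isUnit_det, isUnit_iff_ne_zero, Matrix.det_fin_two_of]
    simp [hp, hr]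

lemma mconj_line (g A : Matrix (Fin 2) (Fin 2) ℝ) :
    mconj g (line A) = line (g * A * g⁻¹) := by
  ext B
  constructor
  · rintro ⟨C, ⟨t, rfl⟩, rfl⟩
    exact ⟨t, by simp [Matrix.mul_smul, Matrix.smul_mul]⟩
  · rintro ⟨t, rfl⟩
    exact ⟨t • A, ⟨t, rfl⟩, by simp [Matrix.mul_smul, Matrix.smul_mul]⟩

lemma line_eq_of_smul {A B : Matrix (Fin 2) (Fin 2) ℝ} (c : ℝ) (hc : c ≠ 0)
    (h : A = c • B) : line A = line B := by
  subst h
  ext M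
  constructor
  · rintro ⟨t, rfl⟩; exact ⟨t * c, smul_smul t c B⟩
  · rintro ⟨t, rfl⟩; exact ⟨t / c, by rw [smul_smul, div_mul_cancel₀ _ hc]⟩

lemma line_mem_of_eq {A B : Matrix (Fin 2) (Fin 2) ℝ} (h : line A = line B) :
    ∃ t : ℝ, A = t • B := by
  have : A ∈ line A := ⟨1, by simp⟩
  rw [h] at this; exact this

lemma lY_eq (l : ℝ) : l • (1 : Matrix (Fin 2) (Fin 2) ℝ) + Y = !![l, 0; 0, l + 1] := by
  rw [Matrix.one_fin_two, Y]
  ext i j; fin_cases i <;> fin_cases j <;> simp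

lemma oneX_eq : (1 : Matrix (Fin 2) (Fin 2) ℝ) + X = !![1, 0; 1, 1] := by
  rw [Matrix.one_fin_two, X]
  ext i j; fin_cases i <;> fin_cases j <;> simp

/-- every line of lower triangular 2×2 matrices is conjugate, by an
invertible lower triangular matrix, to one of ℝ·(λI+Y), ℝ·X, ℝ·(I+X), ℝ·I, and these
representatives are pairwise non-conjugate. -/
theorem stmt16 :
    (∀ ℓ : Submodule ℝ (Matrix (Fin 2) (Fin 2) ℝ),
      (∀ A ∈ ℓ, A 0 1 = 0) → Module.finrank ℝ ℓ = 1 →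
      ∃ g : Matrix (Fin 2) (Fin 2) ℝ, lowerUnit g ∧
        ((∃ l : ℝ, mconj g (ℓ : Set (Matrix (Fin 2) (Fin 2) ℝ)) = line (l • 1 + Y)) ∨
          mconj g (ℓ : Set (Matrix (Fin 2) (Fin 2) ℝ)) = line X ∨
          mconj g (ℓ : Set (Matrix (Fin 2) (Fin 2) ℝ)) = line (1 + X) ∨
          mconj g (ℓ : Set (Matrix (Fin 2) (Fin 2) ℝ)) = line 1)) ∧
    (∀ l l' : ℝ, l ≠ l' → ∀ g, lowerUnit g → mconj g (line (l • 1 + Y)) ≠ line (l' • 1 + Y)) ∧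
    (∀ l : ℝ, ∀ g, lowerUnit g → mconj g (line (l • 1 + Y)) ≠ line X) ∧
    (∀ l : ℝ, ∀ g, lowerUnit g → mconj g (line (l • 1 + Y)) ≠ line (1 + X)) ∧
    (∀ l : ℝ, ∀ g, lowerUnit g → mconj g (line (l • 1 + Y)) ≠ line 1) ∧
    (∀ g, lowerUnit g → mconj g (line X) ≠ line (1 + X)) ∧
    (∀ g, lowerUnit g → mconj g (line X) ≠ line 1) ∧
    (∀ g, lowerUnit g → mconj g (line (1 + X)) ≠ line 1) := by
  have hone : lowerUnit (1 : Matrix (Fin 2) (Fin 2) ℝ) := ⟨isUnit_one, by simp⟩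
  refine ⟨?_, ?_, ?_, ?_, ?_, ?_, ?_, ?_⟩
  · intro ℓ hlow hrk
    obtain ⟨v, hv0, hv⟩ := (finrank_eq_one_iff').mp hrk
    set A : Matrix (Fin 2) (Fin 2) ℝ := v.val with hAdef
    have hAmem : A ∈ ℓ := v.2
    have hAne : A ≠ 0 := fun h => hv0 (Subtype.ext h)
    have hset : (ℓ : Set (Matrix (Fin 2) (Fin 2) ℝ)) = line A := by
      ext B
      constructor
      · intro hB
        obtain ⟨t, ht⟩ := hv ⟨B, hB⟩
        refine ⟨t, ?_⟩
        have h2 := congrArg Subtype.val ht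
        simpa using h2.symm
      · rintro ⟨t, rfl⟩
        exact ℓ.smul_mem t hAmem
    have hA01 : A 0 1 = 0 := hlow A hAmem
    by_cases had : A 0 0 = A 1 1
    · by_cases ha0 : A 0 0 = 0
      · -- A = c • X with c ≠ 0
        have hc0 : A 1 0 ≠ 0 := by
          intro h
          apply hAne
          rw [Matrix.eta_fin_two A, hA01, ha0, h, ← had, ha0]
          ext i j; fin_cases i <;> fin_cases j <;> simp
        refine ⟨1, hone, Or.inr (Or.inl ?_)⟩
        rw [hset, mconj_line, one_mul, inv_one, mul_one]
        apply line_eq_of_smul (A 1 0) hc0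
        rw [Matrix.eta_fin_two A, hA01, ha0, ← had, ha0, X]
        ext i j; fin_cases i <;> fin_cases j <;> simp
      · by_cases hc0 : A 1 0 = 0
        · -- A = a • 1
          refine ⟨1, hone, Or.inr (Or.inr (Or.inr ?_))⟩
          rw [hset, mconj_line, one_mul, inv_one, mul_one]
          apply line_eq_of_smul (A 0 0) ha0
          rw [Matrix.eta_fin_two A, hA01, hc0, ← had, Matrix.one_fin_two]
          ext i j; fin_cases i <;> fin_cases j <;> simp
        · -- a = d ≠ 0, c ≠ 0 : conjugate to line (1+X)
          have hr : A 0 0 / A 1 0 ≠ 0 := div_ne_zero ha0 hc0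
          refine ⟨!![1, 0; 0, A 0 0 / A 1 0],
            (lowerUnit_iff _).mpr ⟨1, 0, A 0 0 / A 1 0, one_ne_zero, hr, rfl⟩,
            Or.inr (Or.inr (Or.inl ?_))⟩
          rw [hset, mconj_line, conj_formula 1 0 (A 0 0 / A 1 0) one_ne_zero hr A hA01]
          apply line_eq_of_smul (A 0 0) ha0
          rw [oneX_eq]
          ext i j
          fin_cases i <;> fin_cases j <;> simp [← had] <;> field_simp
    · -- a ≠ d : conjugate to line (l • 1 + Y), l = a/(d-a)
      have hda : A 1 1 - A 0 0 ≠ 0 := sub_ne_zero_of_ne (Ne.symm had)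
      refine ⟨!![1, 0; A 1 0 / (A 1 1 - A 0 0), 1],
        (lowerUnit_iff _).mpr ⟨1, A 1 0 / (A 1 1 - A 0 0), 1, one_ne_zero, one_ne_zero, rfl⟩,
        Or.inl ⟨A 0 0 / (A 1 1 - A 0 0), ?_⟩⟩
      rw [hset, mconj_line,
        conj_formula 1 (A 1 0 / (A 1 1 - A 0 0)) 1 one_ne_zero one_ne_zero A hA01]
      apply line_eq_of_smul (A 1 1 - A 0 0) hda
      rw [lY_eq]
      ext i j
      fin_cases i <;> fin_cases j <;> simp <;> field_simp <;> ring
  · intro l l' hll g hg heq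
    obtain ⟨p, q, r, hp, hr, rfl⟩ := (lowerUnit_iff g).mp hg
    rw [mconj_line] at heq
    obtain ⟨t, ht⟩ := line_mem_of_eq heq
    rw [lY_eq, lY_eq, conj_formula p q r hp hr _ (by simp)] at ht
    have h00 := congrFun (congrFun ht 0) 0
    have h11 := congrFun (congrFun ht 1) 1
    simp at h00 h11
    apply hll
    have ht1 : t = 1 := by linear_combination h00 - h11
    rw [ht1, one_mul] at h00
    exact h00
  · intro l g hg heq
    obtain ⟨p, q, r, hp, hr, rfl⟩ := (lowerUnit_iff g).mp hg
    rw [mconj_line] at heq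
    obtain ⟨t, ht⟩ := line_mem_of_eq heq
    rw [lY_eq, X, conj_formula p q r hp hr _ (by simp)] at ht
    have h00 := congrFun (congrFun ht 0) 0
    have h11 := congrFun (congrFun ht 1) 1
    simp at h00 h11
    linarith
  · intro l g hg heq
    obtain ⟨p, q, r, hp, hr, rfl⟩ := (lowerUnit_iff g).mp hg
    rw [mconj_line] at heq
    obtain ⟨t, ht⟩ := line_mem_of_eq heq
    rw [lY_eq, oneX_eq, conj_formula p q r hp hr _ (by simp)] at ht
    have h00 := congrFun (congrFun ht 0) 0
    have h11 := congrFun (congrFun ht 1) 1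
    simp at h00 h11
    linarith
  · intro l g hg heq
    obtain ⟨p, q, r, hp, hr, rfl⟩ := (lowerUnit_iff g).mp hg
    rw [mconj_line] at heq
    obtain ⟨t, ht⟩ := line_mem_of_eq heq
    rw [lY_eq, Matrix.one_fin_two, conj_formula p q r hp hr _ (by simp)] at ht
    have h00 := congrFun (congrFun ht 0) 0
    have h11 := congrFun (congrFun ht 1) 1
    simp at h00 h11
    linarith
  · intro g hg heq
    obtain ⟨p, q, r, hp, hr, rfl⟩ := (lowerUnit_iff g).mp hg
    rw [mconj_line] at heq
    obtain ⟨t, ht⟩ := line_mem_of_eq heq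
    rw [oneX_eq, X, conj_formula p q r hp hr _ (by simp)] at ht
    have h00 := congrFun (congrFun ht 0) 0
    have h10 := congrFun (congrFun ht 1) 0
    simp at h00 h10
    rw [← h00] at h10
    exact hr ((div_eq_zero_iff.mp h10).resolve_right hp)
  · intro g hg heq
    obtain ⟨p, q, r, hp, hr, rfl⟩ := (lowerUnit_iff g).mp hg
    rw [mconj_line] at heq
    obtain ⟨t, ht⟩ := line_mem_of_eq heq
    rw [X, Matrix.one_fin_two, conj_formula p q r hp hr _ (by simp)] at ht
    have h10 := congrFun (congrFun ht 1) 0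
    simp [hp] at h10
    exact hr h10
  · intro g hg heq
    obtain ⟨p, q, r, hp, hr, rfl⟩ := (lowerUnit_iff g).mp hg
    rw [mconj_line] at heq
    obtain ⟨t, ht⟩ := line_mem_of_eq heq
    rw [oneX_eq, Matrix.one_fin_two, conj_formula p q r hp hr _ (by simp)] at ht
    have h10 := congrFun (congrFun ht 1) 0
    simp [hp] at h10
    exact hr h10
end

section
/- Classification of 2-dimensional Lie subalgebras of the lower triangular 2×2 real matrices: let X = E₂₁ and Y = E₂₂. For every two-dimensional subspace P of the lower triangular 2×2 real matrices that is closed under the commutator bracket, there exists an invertible lower triangular g ∈ GL(2,ℝ) such that g P g⁻¹ is exactly one of: span{X, λI + Y} for a unique λ ∈ ℝ; span{I, Y}; or span{I, X}. These representatives are pairwise non-conjugate under invertible lower triangular matrices. -/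
open Matrix

/-- The plane spanned by A and B in M₂(ℝ). -/
def plane (A B : Matrix (Fin 2) (Fin 2) ℝ) : Set (Matrix (Fin 2) (Fin 2) ℝ) :=
  {C | ∃ s t : ℝ, C = s • A + t • B}

/- ------------------- auxiliary lemmas ------------------- -/

lemma conj_linear (g : Matrix (Fin 2) (Fin 2) ℝ) (s t : ℝ) (C D : Matrix (Fin 2) (Fin 2) ℝ) :
    g * (s • C + t • D) * g⁻¹ = s • (g * C * g⁻¹) + t • (g * D * g⁻¹) := by
  simp [mul_add, add_mul, mul_smul_comm, smul_mul_assoc]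

lemma mconj_plane (g C D : Matrix (Fin 2) (Fin 2) ℝ) :
    mconj g (plane C D) = plane (g * C * g⁻¹) (g * D * g⁻¹) := by
  ext M
  constructor
  · rintro ⟨A, ⟨s, t, rfl⟩, rfl⟩
    exact ⟨s, t, conj_linear g s t C D⟩
  · rintro ⟨s, t, rfl⟩
    exact ⟨s • C + t • D, ⟨s, t, rfl⟩, conj_linear g s t C D⟩

lemma lower_inv_s18 (a b d : ℝ) (ha : a ≠ 0) (hd : d ≠ 0) :
    (!![a, 0; b, d])⁻¹ = !![a⁻¹, 0; -b * (a * d)⁻¹, d⁻¹] := by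
  apply Matrix.inv_eq_right_inv
  ext i j
  fin_cases i <;> fin_cases j <;>
    simp [Matrix.mul_apply, Fin.sum_univ_two, Matrix.one_apply] <;> field_simp <;> ring

lemma conj_lower (a b d m p q : ℝ) (ha : a ≠ 0) (hd : d ≠ 0) :
    !![a, 0; b, d] * !![m, 0; p, q] * (!![a, 0; b, d])⁻¹ =
      !![m, 0; (b * (m - q) + d * p) * a⁻¹, q] := by
  rw [lower_inv_s18 a b d ha hd]
  ext i j
  fin_cases i <;> fin_cases j <;>
    simp [Matrix.mul_apply, Fin.sum_univ_two] <;> field_simp <;> ring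

lemma lowerUnit_of (a b d : ℝ) (ha : a ≠ 0) (hd : d ≠ 0) : lowerUnit !![a, 0; b, d] := by
  constructor
  · rw [Matrix.isUnit_iff_isUnit_det, Matrix.det_fin_two_of]
    simp [isUnit_iff_ne_zero, ha, hd]
  · simp

lemma range_pair {V : Type*} (C D : V) : Set.range ![C, D] = {C, D} := by
  ext x
  constructor
  · rintro ⟨i, rfl⟩; fin_cases i <;> simp
  · rintro (rfl | rfl)
    · exact ⟨0, rfl⟩
    · exact ⟨1, rfl⟩

lemma carrier_eq (P : Submodule ℝ (Matrix (Fin 2) (Fin 2) ℝ))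
    (h2 : Module.finrank ℝ P = 2) (C D : Matrix (Fin 2) (Fin 2) ℝ)
    (hC : C ∈ P) (hD : D ∈ P) (hind : LinearIndependent ℝ ![C, D]) :
    (P : Set (Matrix (Fin 2) (Fin 2) ℝ)) = plane C D := by
  have hle : Submodule.span ℝ {C, D} ≤ P := by
    rw [Submodule.span_le]
    rintro x (rfl | rfl) <;> assumption
  have hfr : Module.finrank ℝ (Submodule.span ℝ ({C, D} : Set _)) = 2 := by
    rw [← range_pair C D, finrank_span_eq_card hind, Fintype.card_fin]
  have heq : Submodule.span ℝ ({C, D} : Set _) = P :=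
    Submodule.eq_of_le_of_finrank_le hle (by rw [h2, hfr])
  ext x
  rw [← heq]
  simp only [SetLike.mem_coe, Submodule.mem_span_pair, plane, Set.mem_setOf_eq]
  constructor
  · rintro ⟨s, t, rfl⟩; exact ⟨s, t, rfl⟩
  · rintro ⟨s, t, rfl⟩; exact ⟨s, t, rfl⟩

lemma mconj_one (S : Set (Matrix (Fin 2) (Fin 2) ℝ)) : mconj 1 S = S := by
  have : (fun A : Matrix (Fin 2) (Fin 2) ℝ => (1 : Matrix (Fin 2) (Fin 2) ℝ) * A * 1⁻¹) = id := by
    funext A; simp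
  simp [mconj, this]

/-- Case II : the diagonals of A and B are proportional, that of A being nonzero. -/
lemma caseII (P : Submodule ℝ (Matrix (Fin 2) (Fin 2) ℝ))
    (h2 : Module.finrank ℝ P = 2) (A B : Matrix (Fin 2) (Fin 2) ℝ)
    (hA : A ∈ P) (hB : B ∈ P) (hA01 : A 0 1 = 0) (hB01 : B 0 1 = 0)
    (hind : LinearIndependent ℝ ![A, B])
    (hu : A 0 0 ≠ 0 ∨ A 1 1 ≠ 0)
    (hD : A 0 0 * B 1 1 - B 0 0 * A 1 1 = 0) :
    (∃ l : ℝ, (P : Set (Matrix (Fin 2) (Fin 2) ℝ)) = plane X (l • 1 + Y)) ∨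
      (P : Set (Matrix (Fin 2) (Fin 2) ℝ)) = plane 1 X := by
  -- find μ with B diag = μ * A diag
  obtain ⟨μ, hm0, hm1⟩ : ∃ μ : ℝ, B 0 0 = μ * A 0 0 ∧ B 1 1 = μ * A 1 1 := by
    by_cases h0 : A 0 0 = 0
    · rcases hu with h | h
      · exact absurd h0 h
      · refine ⟨B 1 1 / A 1 1, ?_, by field_simp⟩
        have : B 0 0 * A 1 1 = 0 := by rw [h0] at hD; linarith
        rcases mul_eq_zero.1 this with h' | h'
        · rw [h', h0]; ring
        · exact absurd h' h
    · refine ⟨B 0 0 / A 0 0, by field_simp, ?_⟩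
      field_simp
      nlinarith [hD]
  set r : ℝ := B 1 0 - μ * A 1 0 with hr
  have hrX : B - μ • A = r • X := by
    ext i j
    fin_cases i <;> fin_cases j <;>
      simp [X, hA01, hB01, hm0, hm1, hr] <;> ring
  have hrne : r ≠ 0 := by
    intro h0
    have hBA : B = μ • A := by
      have h1 : B - μ • A = 0 := by rw [hrX, h0, zero_smul]
      exact sub_eq_zero.1 h1
    have := (LinearIndependent.pair_iff.1 hind) μ (-1) (by rw [hBA]; ring_nf; module)
    simpa using this.2
  have hX : X ∈ P := by
    have hmem : r⁻¹ • (B - μ • A) ∈ P :=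
      P.smul_mem _ (P.sub_mem hB (P.smul_mem _ hA))
    rwa [hrX, smul_smul, inv_mul_cancel₀ hrne, one_smul] at hmem
  have hXA : LinearIndependent ℝ ![X, A] := by
    rw [LinearIndependent.pair_iff]
    intro s t hst
    have e00 := congrFun (congrFun hst 0) 0
    have e11 := congrFun (congrFun hst 1) 1
    have e10 := congrFun (congrFun hst 1) 0
    simp [X] at e00 e11 e10
    have ht : t = 0 := by
      rcases hu with h | h
      · exact e00.resolve_right h
      · exact e11.resolve_right h
    refine ⟨?_, ht⟩
    rw [ht] at e10
    simpa using e10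
  have hPXA : (P : Set (Matrix (Fin 2) (Fin 2) ℝ)) = plane X A :=
    carrier_eq P h2 X A hX hA hXA
  by_cases hac : A 0 0 = A 1 1
  · -- P = plane 1 X
    have ha0 : A 0 0 ≠ 0 := by
      rcases hu with h | h
      · exact h
      · rw [hac]; exact h
    right
    rw [hPXA]
    ext M
    constructor
    · rintro ⟨s, t, rfl⟩
      refine ⟨t * A 0 0, s + t * A 1 0, ?_⟩
      ext i j
      fin_cases i <;> fin_cases j <;>
        simp [X, Matrix.one_apply, hA01, ← hac] <;> ring
    · rintro ⟨s, t, rfl⟩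
      refine ⟨t - s / A 0 0 * A 1 0, s / A 0 0, ?_⟩
      ext i j
      fin_cases i <;> fin_cases j <;>
        simp [X, Matrix.one_apply, hA01, ← hac] <;> field_simp <;> ring
  · -- P = plane X (l•1 + Y)
    left
    have hca : A 1 1 - A 0 0 ≠ 0 := sub_ne_zero.2 (Ne.symm hac)
    refine ⟨A 0 0 / (A 1 1 - A 0 0), ?_⟩
    rw [hPXA]
    ext M
    constructor
    · rintro ⟨s, t, rfl⟩
      refine ⟨s + t * A 1 0, t * (A 1 1 - A 0 0), ?_⟩
      ext i j
      fin_cases i <;> fin_cases j <;>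
        simp [X, Y, Matrix.one_apply, hA01] <;> field_simp <;> ring
    · rintro ⟨s, t, rfl⟩
      refine ⟨s - t / (A 1 1 - A 0 0) * A 1 0, t / (A 1 1 - A 0 0), ?_⟩
      ext i j
      fin_cases i <;> fin_cases j <;>
        simp [X, Y, Matrix.one_apply, hA01] <;> field_simp <;> ring

/-- every 2-dimensional Lie subalgebra of the lower triangular 2×2 real
matrices is conjugate, by an invertible lower triangular matrix, to exactly one of
span{X, λI+Y} (unique λ ∈ ℝ), span{I,Y}, span{I,X}. -/
theorem stmt18 :
    (∀ P : Submodule ℝ (Matrix (Fin 2) (Fin 2) ℝ),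
      (∀ A ∈ P, A 0 1 = 0) → Module.finrank ℝ P = 2 →
      (∀ A ∈ P, ∀ B ∈ P, A * B - B * A ∈ P) →
      ∃ g : Matrix (Fin 2) (Fin 2) ℝ, lowerUnit g ∧
        ((∃ l : ℝ, mconj g (P : Set (Matrix (Fin 2) (Fin 2) ℝ)) = plane X (l • 1 + Y)) ∨
          mconj g (P : Set (Matrix (Fin 2) (Fin 2) ℝ)) = plane 1 Y ∨
          mconj g (P : Set (Matrix (Fin 2) (Fin 2) ℝ)) = plane 1 X)) ∧
    (∀ l l' : ℝ, l ≠ l' → ∀ g, lowerUnit g →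
      mconj g (plane X (l • 1 + Y)) ≠ plane X (l' • 1 + Y)) ∧
    (∀ l : ℝ, ∀ g, lowerUnit g → mconj g (plane X (l • 1 + Y)) ≠ plane 1 Y) ∧
    (∀ l : ℝ, ∀ g, lowerUnit g → mconj g (plane X (l • 1 + Y)) ≠ plane 1 X) ∧
    (∀ g, lowerUnit g → mconj g (plane 1 Y) ≠ plane 1 X) := by
  have hplaneXY : ∀ l : ℝ, l • (1 : Matrix (Fin 2) (Fin 2) ℝ) + Y = !![l, 0; 0, l + 1] := by
    intro l
    ext i j
    fin_cases i <;> fin_cases j <;> simp [Y, Matrix.one_apply]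
  have hsetup : ∀ g : Matrix (Fin 2) (Fin 2) ℝ, lowerUnit g →
      g 0 0 ≠ 0 ∧ g 1 1 ≠ 0 ∧ g = !![g 0 0, 0; g 1 0, g 1 1] := by
    rintro g ⟨hgu, hg01⟩
    have hdet : g 0 0 * g 1 1 ≠ 0 := by
      have h1 : IsUnit g.det := (Matrix.isUnit_iff_isUnit_det g).1 hgu
      rw [Matrix.det_fin_two, hg01] at h1
      simpa [isUnit_iff_ne_zero] using h1
    refine ⟨fun h => hdet (by rw [h]; ring), fun h => hdet (by rw [h]; ring), ?_⟩
    conv_lhs => rw [Matrix.eta_fin_two g]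
    rw [hg01]
  refine ⟨?_, ?_, ?_, ?_, ?_⟩
  · -- existence
    intro P hlow h2 hbr
    obtain ⟨A, B, hA, hB, hind⟩ : ∃ A B : Matrix (Fin 2) (Fin 2) ℝ,
        A ∈ P ∧ B ∈ P ∧ LinearIndependent ℝ ![A, B] := by
      have b := Module.finBasisOfFinrankEq ℝ P h2
      refine ⟨b 0, b 1, (b 0).2, (b 1).2, ?_⟩
      have h1 : LinearIndependent ℝ (fun i : Fin 2 => ((b i : P) : Matrix (Fin 2) (Fin 2) ℝ)) :=
        b.linearIndependent.map' P.subtype P.ker_subtype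
      have heq : ![((b 0 : P) : Matrix (Fin 2) (Fin 2) ℝ), (b 1 : P)] =
          fun i : Fin 2 => ((b i : P) : Matrix (Fin 2) (Fin 2) ℝ) := by
        funext i; fin_cases i <;> rfl
      rw [heq]
      exact h1
    have hA01 : A 0 1 = 0 := hlow A hA
    have hB01 : B 0 1 = 0 := hlow B hB
    by_cases hD : A 0 0 * B 1 1 - B 0 0 * A 1 1 = 0
    · -- degenerate diagonal case
      have hone : lowerUnit (1 : Matrix (Fin 2) (Fin 2) ℝ) :=
        ⟨isUnit_one, by simp [Matrix.one_apply]⟩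
      by_cases hu : A 0 0 ≠ 0 ∨ A 1 1 ≠ 0
      · rcases caseII P h2 A B hA hB hA01 hB01 hind hu hD with ⟨l, h⟩ | h
        · exact ⟨1, hone, Or.inl ⟨l, by rw [mconj_one]; exact h⟩⟩
        · exact ⟨1, hone, Or.inr (Or.inr (by rw [mconj_one]; exact h))⟩
      · push_neg at hu
        by_cases hv : B 0 0 ≠ 0 ∨ B 1 1 ≠ 0
        · have hswap : LinearIndependent ℝ ![B, A] := by
            rw [LinearIndependent.pair_iff] at hind ⊢
            intro s t hst
            have := hind t s (by rw [add_comm]; exact hst)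
            exact ⟨this.2, this.1⟩
          have hD' : B 0 0 * A 1 1 - A 0 0 * B 1 1 = 0 := by linarith
          rcases caseII P h2 B A hB hA hB01 hA01 hswap hv hD' with ⟨l, h⟩ | h
          · exact ⟨1, hone, Or.inl ⟨l, by rw [mconj_one]; exact h⟩⟩
          · exact ⟨1, hone, Or.inr (Or.inr (by rw [mconj_one]; exact h))⟩
        · exfalso
          push_neg at hv
          have h0 : B 1 0 • A + (-(A 1 0)) • B = 0 := by
            ext i j
            fin_cases i <;> fin_cases j <;>
              simp [hu.1, hu.2, hv.1, hv.2, hA01, hB01] <;> ring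
          have h1 := (LinearIndependent.pair_iff.1 hind) _ _ h0
          have hA0 : A = 0 := by
            ext i j
            fin_cases i <;> fin_cases j <;>
              simp [hu.1, hu.2, hA01, h1.1, neg_eq_zero.1 h1.2]
          have := (LinearIndependent.pair_iff.1 hind) 1 0 (by simp [hA0])
          simpa using this.1
    · -- nondegenerate diagonal case : conjugate to plane 1 Y
      set dD : ℝ := A 0 0 * B 1 1 - B 0 0 * A 1 1 with hdD
      set β1 : ℝ := (B 1 1 * A 1 0 - A 1 1 * B 1 0) / dD with hβ1
      set β2 : ℝ := (A 0 0 * B 1 0 - B 0 0 * A 1 0) / dD with hβ2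
      have hM1 : dD⁻¹ • (B 1 1 • A - A 1 1 • B) = !![1, 0; β1, 0] := by
        ext i j
        fin_cases i <;> fin_cases j <;>
          simp [hA01, hB01, hβ1, div_eq_inv_mul] <;> field_simp [hD] <;> ring <;> simp
      have hM2 : dD⁻¹ • (A 0 0 • B - B 0 0 • A) = !![0, 0; β2, 1] := by
        ext i j
        fin_cases i <;> fin_cases j <;>
          simp [hA01, hB01, hβ2, div_eq_inv_mul] <;> field_simp [hD] <;> ring <;> simp
      have hM1P : (!![1, 0; β1, 0] : Matrix (Fin 2) (Fin 2) ℝ) ∈ P := by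
        rw [← hM1]
        exact P.smul_mem _ (P.sub_mem (P.smul_mem _ hA) (P.smul_mem _ hB))
      have hM2P : (!![0, 0; β2, 1] : Matrix (Fin 2) (Fin 2) ℝ) ∈ P := by
        rw [← hM2]
        exact P.smul_mem _ (P.sub_mem (P.smul_mem _ hB) (P.smul_mem _ hA))
      have hind12 : LinearIndependent ℝ ![(!![1, 0; β1, 0] : Matrix (Fin 2) (Fin 2) ℝ),
          !![0, 0; β2, 1]] := by
        rw [LinearIndependent.pair_iff]
        intro s t hst
        have e00 := congrFun (congrFun hst 0) 0
        have e11 := congrFun (congrFun hst 1) 1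
        simp at e00 e11
        exact ⟨e00, e11⟩
      have hset : (P : Set (Matrix (Fin 2) (Fin 2) ℝ)) =
          plane !![1, 0; β1, 0] !![0, 0; β2, 1] :=
        carrier_eq P h2 _ _ hM1P hM2P hind12
      have hbrM : (!![1, 0; β1, 0] : Matrix (Fin 2) (Fin 2) ℝ) * !![0, 0; β2, 1] -
          !![0, 0; β2, 1] * !![1, 0; β1, 0] = (-(β1 + β2)) • X := by
        ext i j
        fin_cases i <;> fin_cases j <;>
          simp [X, Matrix.mul_apply, Fin.sum_univ_two] <;> ring
      have hkey : β1 + β2 = 0 := by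
        by_contra hk
        have hXP : X ∈ P := by
          have hmem : (-(β1 + β2))⁻¹ • ((!![1, 0; β1, 0] : Matrix (Fin 2) (Fin 2) ℝ) *
              !![0, 0; β2, 1] - !![0, 0; β2, 1] * !![1, 0; β1, 0]) ∈ P :=
            P.smul_mem _ (hbr _ hM1P _ hM2P)
          rwa [hbrM, smul_smul, inv_mul_cancel₀ (neg_ne_zero.2 hk), one_smul] at hmem
        have hXmem : X ∈ (P : Set (Matrix (Fin 2) (Fin 2) ℝ)) := hXP
        rw [hset] at hXmem
        obtain ⟨s, t, hst⟩ := hXmem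
        have e00 := congrFun (congrFun hst 0) 0
        have e11 := congrFun (congrFun hst 1) 1
        have e10 := congrFun (congrFun hst 1) 0
        simp [X] at e00 e11 e10
        first
          | (rw [e00, e11] at e10; simpa using e10)
          | (rw [← e00, ← e11] at e10; simpa using e10)
          | nlinarith [e00, e11, e10]
      refine ⟨!![1, 0; β2, 1], lowerUnit_of 1 β2 1 one_ne_zero one_ne_zero, Or.inr (Or.inl ?_)⟩
      rw [hset, mconj_plane]
      have c1 : (!![1, 0; β2, 1] : Matrix (Fin 2) (Fin 2) ℝ) * !![1, 0; β1, 0] *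
          (!![1, 0; β2, 1] : Matrix (Fin 2) (Fin 2) ℝ)⁻¹ = !![1, 0; 0, 0] := by
        rw [conj_lower 1 β2 1 1 β1 0 one_ne_zero one_ne_zero]
        ext i j
        fin_cases i <;> fin_cases j <;> simp <;> linarith
      have c2 : (!![1, 0; β2, 1] : Matrix (Fin 2) (Fin 2) ℝ) * !![0, 0; β2, 1] *
          (!![1, 0; β2, 1] : Matrix (Fin 2) (Fin 2) ℝ)⁻¹ = Y := by
        rw [conj_lower 1 β2 1 0 β2 1 one_ne_zero one_ne_zero]
        ext i j
        fin_cases i <;> fin_cases j <;> simp [Y]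
      rw [c1, c2]
      ext M
      constructor
      · rintro ⟨s, t, rfl⟩
        refine ⟨s, t - s, ?_⟩
        ext i j
        fin_cases i <;> fin_cases j <;> simp [Y, Matrix.one_apply] <;> ring
      · rintro ⟨s, t, rfl⟩
        refine ⟨s, t + s, ?_⟩
        ext i j
        fin_cases i <;> fin_cases j <;> simp [Y, Matrix.one_apply] <;> ring
  · -- distinct l
    intro l l' hll g hg heq
    obtain ⟨ha, hd, hge⟩ := hsetup g hg
    have hmem : g * (l • 1 + Y) * g⁻¹ ∈ mconj g (plane X (l • 1 + Y)) :=
      ⟨l • 1 + Y, ⟨0, 1, by simp⟩, rfl⟩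
    rw [heq] at hmem
    obtain ⟨s, t, hst⟩ := hmem
    rw [hplaneXY l] at hst
    conv_lhs at hst => rw [hge]
    rw [conj_lower _ _ _ _ _ _ ha hd, hplaneXY l'] at hst
    have e00 := congrFun (congrFun hst 0) 0
    have e11 := congrFun (congrFun hst 1) 1
    simp [X] at e00 e11
    apply hll
    have ht : t = 1 := by linear_combination e00 - e11
    rw [ht] at e00
    linarith
  · -- plane X (l•1+Y) vs plane 1 Y
    intro l g hg heq
    obtain ⟨ha, hd, hge⟩ := hsetup g hg
    have hmem : g * X * g⁻¹ ∈ mconj g (plane X (l • 1 + Y)) := ⟨X, ⟨1, 0, by simp⟩, rfl⟩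
    rw [heq] at hmem
    obtain ⟨s, t, hst⟩ := hmem
    have hXe : X = !![0, 0; 1, 0] := rfl
    conv_lhs at hst => rw [hge, hXe]
    rw [conj_lower _ _ _ _ _ _ ha hd] at hst
    have e10 := congrFun (congrFun hst 1) 0
    simp [Y, Matrix.one_apply] at e10
    rcases e10 with e10 | e10
    · exact hd e10
    · exact ha e10
  · -- plane X (l•1+Y) vs plane 1 X
    intro l g hg heq
    obtain ⟨ha, hd, hge⟩ := hsetup g hg
    have hmem : g * (l • 1 + Y) * g⁻¹ ∈ mconj g (plane X (l • 1 + Y)) :=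
      ⟨l • 1 + Y, ⟨0, 1, by simp⟩, rfl⟩
    rw [heq] at hmem
    obtain ⟨s, t, hst⟩ := hmem
    rw [hplaneXY l] at hst
    conv_lhs at hst => rw [hge]
    rw [conj_lower _ _ _ _ _ _ ha hd] at hst
    have e00 := congrFun (congrFun hst 0) 0
    have e11 := congrFun (congrFun hst 1) 1
    simp [X, Matrix.one_apply] at e00 e11
    linarith
  · -- plane 1 Y vs plane 1 X
    intro g hg heq
    obtain ⟨ha, hd, hge⟩ := hsetup g hg
    have hmem : g * Y * g⁻¹ ∈ mconj g (plane 1 Y) := ⟨Y, ⟨0, 1, by simp⟩, rfl⟩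
    rw [heq] at hmem
    obtain ⟨s, t, hst⟩ := hmem
    have hYe : Y = !![0, 0; 0, 1] := rfl
    conv_lhs at hst => rw [hge, hYe]
    rw [conj_lower _ _ _ _ _ _ ha hd] at hst
    have e00 := congrFun (congrFun hst 0) 0
    have e11 := congrFun (congrFun hst 1) 1
    simp [X, Matrix.one_apply] at e00 e11
    rw [← e00] at e11
    simpa using e11
end

section
/- Classification of lines of diagonal matrices: let σ₋₁ = [[0,1],[1,0]]. For every one-dimensional subspace ℓ of the space of diagonal 2×2 real matrices, there exist a unique β ∈ [−1,1] and a matrix g ∈ GL(2,ℝ) satisfying ᵗg⁻¹ σ₋₁ g⁻¹ ∈ ℝ·σ₋₁ such that g ℓ g⁻¹ = ℝ·diag(1, β); moreover for β ≠ β′ in [−1,1], no g ∈ GL(2,ℝ) with ᵗg⁻¹ σ₋₁ g⁻¹ ∈ ℝ·σ₋₁ conjugates ℝ·diag(1,β) onto ℝ·diag(1,β′). -/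
open Matrix

/-- g ∈ GL(2,ℝ) preserves the line ℝ·σ₋₁ under the action g†(σ) = ᵗg⁻¹σg⁻¹,
where σ₋₁ = [[0,1],[1,0]]. -/
def presAntidiag (g : Matrix (Fin 2) (Fin 2) ℝ) : Prop :=
  IsUnit g ∧ ∃ c : ℝ, (gᵀ)⁻¹ * !![(0 : ℝ), 1; 1, 0] * g⁻¹ = c • !![(0 : ℝ), 1; 1, 0]

abbrev σm : Matrix (Fin 2) (Fin 2) ℝ := !![(0 : ℝ), 1; 1, 0]

lemma line_smul {c : ℝ} (hc : c ≠ 0) (A : Matrix (Fin 2) (Fin 2) ℝ) :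
    line (c • A) = line A := by
  ext B
  constructor
  · rintro ⟨t, rfl⟩; exact ⟨t * c, by rw [smul_smul]⟩
  · rintro ⟨t, rfl⟩; exact ⟨t / c, by rw [smul_smul, div_mul_cancel₀ _ hc]⟩

lemma sigma_mul_sigma : σm * σm = 1 := by
  norm_num [Matrix.mul_fin_two, ← Matrix.one_fin_two]

lemma sigma_inv : σm⁻¹ = σm := inv_eq_right_inv sigma_mul_sigma

lemma sigma_unit : IsUnit σm := by
  rw [Matrix.isUnit_iff_isUnit_det]
  norm_num [Matrix.det_fin_two_of]

lemma presAntidiag_one : presAntidiag 1 := ⟨isUnit_one, 1, by simp⟩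

lemma presAntidiag_sigma : presAntidiag σm := by
  refine ⟨sigma_unit, 1, ?_⟩
  have ht : σmᵀ = σm := by ext i j; fin_cases i <;> fin_cases j <;> simp
  rw [ht, sigma_inv, one_smul, Matrix.mul_assoc, sigma_mul_sigma, Matrix.mul_one]

lemma presAntidiag_shape {g : Matrix (Fin 2) (Fin 2) ℝ} (h : presAntidiag g) :
    (g 0 1 = 0 ∧ g 1 0 = 0) ∨ (g 0 0 = 0 ∧ g 1 1 = 0) := by
  obtain ⟨hu, c, hc⟩ := h
  have hdet : IsUnit g.det := (Matrix.isUnit_iff_isUnit_det g).1 hu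
  have hdetT : IsUnit gᵀ.det := by rwa [Matrix.det_transpose]
  have e1 : gᵀ * (gᵀ)⁻¹ = 1 := Matrix.mul_nonsing_inv _ hdetT
  have e2 : g⁻¹ * g = 1 := Matrix.nonsing_inv_mul _ hdet
  have key : σm = c • (gᵀ * σm * g) := by
    calc σm = gᵀ * (gᵀ)⁻¹ * σm * (g⁻¹ * g) := by rw [e1, e2]; simp
      _ = gᵀ * ((gᵀ)⁻¹ * σm * g⁻¹) * g := by simp only [Matrix.mul_assoc]
      _ = gᵀ * (c • σm) * g := by rw [hc]
      _ = c • (gᵀ * σm * g) := by rw [Matrix.mul_smul, Matrix.smul_mul]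
  have h00 := congrFun (congrFun key 0) 0
  have h01 := congrFun (congrFun key 0) 1
  have h11 := congrFun (congrFun key 1) 1
  simp [Matrix.mul_apply, Fin.sum_univ_two] at h00 h01 h11
  have hc0 : c ≠ 0 := by
    intro hc0; rw [hc0] at h01; simp at h01
  have hdne : g 0 0 * g 1 1 - g 0 1 * g 1 0 ≠ 0 := by
    rw [← Matrix.det_fin_two]
    exact (isUnit_iff_ne_zero.1 hdet)
  have hA : g 0 0 * g 1 0 = 0 := by
    rcases h00 with h | h
    · exact absurd h hc0
    · linarith
  have hB : g 0 1 * g 1 1 = 0 := by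
    rcases h11 with h | h
    · exact absurd h hc0
    · linarith
  rcases mul_eq_zero.1 hA with h1 | h1
  · right
    refine ⟨h1, ?_⟩
    have : g 0 1 ≠ 0 := by intro h2; apply hdne; rw [h1, h2]; ring
    rcases mul_eq_zero.1 hB with h2 | h2
    · exact absurd h2 this
    · exact h2
  · left
    have hgd : g 1 1 ≠ 0 := by intro h2; apply hdne; rw [h1, h2]; ring
    rcases mul_eq_zero.1 hB with h2 | h2
    · exact ⟨h2, h1⟩
    · exact absurd h2 hgd

lemma conj_diag {g : Matrix (Fin 2) (Fin 2) ℝ} (hu : IsUnit g)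
    (h1 : g 0 1 = 0) (h2 : g 1 0 = 0) (x y : ℝ) :
    g * !![x, 0; 0, y] * g⁻¹ = !![x, 0; 0, y] := by
  have hgg : g * g⁻¹ = 1 := Matrix.mul_nonsing_inv _ ((Matrix.isUnit_iff_isUnit_det g).1 hu)
  have comm : g * !![x, 0; 0, y] = !![x, 0; 0, y] * g := by
    ext i j
    fin_cases i <;> fin_cases j <;>
      simp [Matrix.mul_apply, Fin.sum_univ_two, h1, h2] <;> ring
  rw [comm, Matrix.mul_assoc, hgg, Matrix.mul_one]

lemma conj_antidiag {g : Matrix (Fin 2) (Fin 2) ℝ} (hu : IsUnit g)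
    (h1 : g 0 0 = 0) (h2 : g 1 1 = 0) (x y : ℝ) :
    g * !![x, 0; 0, y] * g⁻¹ = !![y, 0; 0, x] := by
  have hgg : g * g⁻¹ = 1 := Matrix.mul_nonsing_inv _ ((Matrix.isUnit_iff_isUnit_det g).1 hu)
  have comm : g * !![x, 0; 0, y] = !![y, 0; 0, x] * g := by
    ext i j
    fin_cases i <;> fin_cases j <;>
      simp [Matrix.mul_apply, Fin.sum_univ_two, h1, h2] <;> ring
  rw [comm, Matrix.mul_assoc, hgg, Matrix.mul_one]

lemma line_eq_elim {a b β' : ℝ} (h : line !![a, 0; 0, b] = line !![(1:ℝ), 0; 0, β']) :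
    ∃ t : ℝ, a = t ∧ b = t * β' := by
  have hm : !![a, 0; 0, b] ∈ line !![(1:ℝ), 0; 0, β'] := by
    rw [← h]; exact ⟨1, (one_smul _ _).symm⟩
  obtain ⟨t, ht⟩ := hm
  refine ⟨t, ?_, ?_⟩
  · have := congrFun (congrFun ht 0) 0; simpa using this
  · have := congrFun (congrFun ht 1) 1; simpa using this

lemma diag_smul {a b : ℝ} (ha : a ≠ 0) : !![a, 0; 0, b] = a • !![(1:ℝ), 0; 0, b / a] := by
  ext i j
  fin_cases i <;> fin_cases j <;> simp <;> field_simp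

/-- every line of diagonal 2×2 matrices is conjugate, by some g ∈ GL(2,ℝ)
preserving ℝ·σ₋₁, to ℝ·diag(1,β) for a unique β ∈ [−1,1], and different β ∈ [−1,1] give
non-conjugate lines. -/
theorem stmt19 :
    (∀ ℓ : Submodule ℝ (Matrix (Fin 2) (Fin 2) ℝ),
      (∀ A ∈ ℓ, A 0 1 = 0 ∧ A 1 0 = 0) → Module.finrank ℝ ℓ = 1 →
      ∃ β : ℝ, β ∈ Set.Icc (-1 : ℝ) 1 ∧
        ∃ g : Matrix (Fin 2) (Fin 2) ℝ, presAntidiag g ∧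
          mconj g (ℓ : Set (Matrix (Fin 2) (Fin 2) ℝ)) = line !![(1 : ℝ), 0; 0, β]) ∧
    (∀ β β' : ℝ, β ∈ Set.Icc (-1 : ℝ) 1 → β' ∈ Set.Icc (-1 : ℝ) 1 → β ≠ β' →
      ∀ g : Matrix (Fin 2) (Fin 2) ℝ, presAntidiag g →
        mconj g (line !![(1 : ℝ), 0; 0, β]) ≠ line !![(1 : ℝ), 0; 0, β']) := by
  constructor
  · intro ℓ hdiag hrank
    obtain ⟨v, hv0, hv⟩ := finrank_eq_one_iff'.mp hrank
    set A : Matrix (Fin 2) (Fin 2) ℝ := (v : Matrix (Fin 2) (Fin 2) ℝ) with hAdef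
    have hA0 : A ≠ 0 := by
      intro h
      exact hv0 (ZeroMemClass.coe_eq_zero.1 (hAdef ▸ h))
    have hset : (ℓ : Set (Matrix (Fin 2) (Fin 2) ℝ)) = line A := by
      ext B
      constructor
      · intro hB
        obtain ⟨c, hc⟩ := hv ⟨B, hB⟩
        have := congrArg Subtype.val hc
        exact ⟨c, by simpa using this.symm⟩
      · rintro ⟨t, rfl⟩
        exact ℓ.smul_mem t v.2
    obtain ⟨hd1, hd2⟩ := hdiag A v.2
    have hAeta : A = !![A 0 0, 0; 0, A 1 1] := by
      have h := Matrix.eta_fin_two A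
      rw [hd1, hd2] at h
      exact h
    set a := A 0 0 with ha_def
    set b := A 1 1 with hb_def
    have hab : a ≠ 0 ∨ b ≠ 0 := by
      by_contra h
      push_neg at h
      apply hA0
      rw [hAeta, h.1, h.2]
      ext i j
      fin_cases i <;> fin_cases j <;> simp
    rcases le_or_gt |b| |a| with hba | hba
    · have ha : a ≠ 0 := by
        rintro h
        rw [h, abs_zero] at hba
        rcases hab with h' | h'
        · exact h' h
        · exact h' (abs_eq_zero.1 (le_antisymm hba (abs_nonneg b)))
      refine ⟨b / a, Set.mem_Icc.2 (abs_le.1 ?_), 1, presAntidiag_one, ?_⟩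
      · rw [abs_div]
        exact (div_le_one (abs_pos.2 ha)).2 hba
      · rw [hset, mconj_line, inv_one, Matrix.one_mul, Matrix.mul_one,
          hAeta, diag_smul ha, line_smul ha]
    · have hb : b ≠ 0 := by
        intro h
        rw [h, abs_zero] at hba
        exact absurd hba (not_lt.2 (abs_nonneg a))
      refine ⟨a / b, Set.mem_Icc.2 (abs_le.1 ?_), σm, presAntidiag_sigma, ?_⟩
      · rw [abs_div]
        exact (div_le_one (abs_pos.2 hb)).2 hba.le
      · rw [hset, hAeta, mconj_line,
          conj_antidiag sigma_unit (by norm_num) (by norm_num) a b,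
          diag_smul hb, line_smul hb]
  · intro β β' hβ hβ' hne g hg hconj
    rw [mconj_line] at hconj
    rcases presAntidiag_shape hg with ⟨h1, h2⟩ | ⟨h1, h2⟩
    · rw [conj_diag hg.1 h1 h2] at hconj
      obtain ⟨t, ht1, ht2⟩ := line_eq_elim hconj
      exact hne (by rw [ht2, ← ht1, one_mul])
    · rw [conj_antidiag hg.1 h1 h2] at hconj
      obtain ⟨t, ht1, ht2⟩ := line_eq_elim hconj
      have hββ' : β * β' = 1 := by rw [ht1]; linarith [ht2]
      obtain ⟨hβl, hβr⟩ := Set.mem_Icc.1 hβ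
      obtain ⟨hβ'l, hβ'r⟩ := Set.mem_Icc.1 hβ'
      have h0 : (β - β') ^ 2 ≤ 0 := by nlinarith
      have h1 : β - β' = 0 := by nlinarith [sq_nonneg (β - β')]
      exact hne (by linarith)
end
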